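/- Let G be a finite group and K a normal subgroup of G isomorphic to SL(2,3), the group of 2×2 matrices of determinant 1 over the field with 3 elements. Suppose α ∈ G \ K has order 2. Then the number of elements of order 2 in the coset αK is at most 12. -/

import Mathlib

set_option maxRecDepth 100000

abbrev SL23 := Matrix.SpecialLinearGroup (Fin 2) (ZMod 3)
instance : DecidableEq SL23 := fun a b => decidable_of_iff (a.1 = b.1) Subtype.ext_iff.symm
instance : Fintype SL23 := by unfold SL23 Matrix.SpecialLinearGroup; infer_instance

def zz : SL23 := ⟨!![2,0;0,2], by decide⟩

/-! raw representation -/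
abbrev M4 := ZMod 3 × ZMod 3 × ZMod 3 × ZMod 3
def mulM (x y : M4) : M4 :=
  (x.1*y.1 + x.2.1*y.2.2.1, x.1*y.2.1 + x.2.1*y.2.2.2,
   x.2.2.1*y.1 + x.2.2.2*y.2.2.1, x.2.2.1*y.2.1 + x.2.2.2*y.2.2.2)
def invM (x : M4) : M4 := (x.2.2.2, -x.2.1, -x.2.2.1, x.1)
def zM : M4 := (2,0,0,2)
def oneM : M4 := (1,0,0,1)
def listSL : List M4 := [(0,1,2,0), (0,1,2,1), (0,1,2,2), (0,2,1,0), (0,2,1,1), (0,2,1,2), (1,0,0,1), (1,0,1,1), (1,0,2,1), (1,1,0,1), (1,1,1,2), (1,1,2,0), (1,2,0,1), (1,2,1,0), (1,2,2,2), (2,0,0,2), (2,0,1,2), (2,0,2,2), (2,1,0,2), (2,1,1,1), (2,1,2,0), (2,2,0,2), (2,2,1,0), (2,2,2,1)]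

def ord3M (c : M4) : Prop := mulM c (mulM c c) = oneM ∧ c ≠ oneM
def ord4M (x : M4) : Prop := mulM (mulM x x) (mulM x x) = oneM ∧ mulM x x ≠ oneM
def BadBM (u v w : M4) : Prop :=
  mulM u v ≠ mulM v u ∧ (mulM u v = mulM zM w ∨ mulM u v = mulM zM (invM w))

instance (c : M4) : Decidable (ord3M c) := by unfold ord3M; infer_instance
instance (x : M4) : Decidable (ord4M x) := by unfold ord4M; infer_instance
instance (u v w : M4) : Decidable (BadBM u v w) := by unfold BadBM; infer_instance

def hypB (c d e : M4) : Prop :=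
  ord3M c ∧ ord3M d ∧ ord3M e ∧ d ≠ c ∧ d ≠ invM c ∧ e ≠ c ∧ e ≠ invM c ∧ e ≠ d ∧ e ≠ invM d
instance (c d e : M4) : Decidable (hypB c d e) := by unfold hypB; infer_instance
def concB (c d e : M4) : Prop :=
  BadBM c d e ∨ BadBM c e d ∨ BadBM d c e ∨ BadBM d e c ∨ BadBM e c d ∨ BadBM e d c
instance (c d e : M4) : Decidable (concB c d e) := by unfold concB; infer_instance

lemma claimB_M : ∀ c ∈ listSL, ∀ d ∈ listSL, ∀ e ∈ listSL, hypB c d e → concB c d e := by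
  decide

def BadCM (x y c : M4) : Prop :=
  (mulM y (mulM x (mulM c x)) = c ∧ mulM y (mulM x (mulM c x)) ≠ mulM (mulM x (mulM c x)) y) ∨
  (mulM x (mulM y (mulM c y)) = c ∧ mulM x (mulM y (mulM c y)) ≠ mulM (mulM y (mulM c y)) x) ∨
  (mulM y c = mulM x (mulM c x) ∧ mulM y c ≠ mulM c y) ∨
  (mulM x c = mulM y (mulM c y) ∧ mulM x c ≠ mulM c x)

instance (x y c : M4) : Decidable (BadCM x y c) := by unfold BadCM; infer_instance

def hypC (x y c : M4) : Prop := ord4M x ∧ ord4M y ∧ y ≠ x ∧ y ≠ invM x ∧ ord3M c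
instance (x y c : M4) : Decidable (hypC x y c) := by unfold hypC; infer_instance

lemma claimC_M : ∀ x ∈ listSL, ∀ y ∈ listSL, ∀ c ∈ listSL, hypC x y c → BadCM x y c := by
  decide

/-! bridge -/
def toM (g : SL23) : M4 := (g.1 0 0, g.1 0 1, g.1 1 0, g.1 1 1)

lemma toM_mem (x : SL23) : toM x ∈ listSL := by revert x; decide
lemma toM_inj : Function.Injective toM := by
  intro x y h; revert h; revert x y; decide
lemma toM_mul (x y : SL23) : toM (x*y) = mulM (toM x) (toM y) := by revert x y; decide
lemma toM_inv (x : SL23) : toM x⁻¹ = invM (toM x) := by revert x; decide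
lemma toM_one : toM 1 = oneM := by decide
lemma toM_zz : toM zz = zM := by decide

/-! SL23-level claims -/
def BadB (u v w : SL23) : Prop := u*v ≠ v*u ∧ (u*v = zz*w ∨ u*v = zz*w⁻¹)
def BadC (x y c : SL23) : Prop :=
  (y*(x*(c*x)) = c ∧ y*(x*(c*x)) ≠ (x*(c*x))*y) ∨
  (x*(y*(c*y)) = c ∧ x*(y*(c*y)) ≠ (y*(c*y))*x) ∨
  (y*c = x*(c*x) ∧ y*c ≠ c*y) ∨
  (x*c = y*(c*y) ∧ x*c ≠ c*x)

lemma toM_ne {a b : SL23} (h : a ≠ b) : toM a ≠ toM b := fun hh => h (toM_inj hh)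

lemma ord3_toM {c : SL23} (h3 : c^3 = 1) (h1 : c ≠ 1) : ord3M (toM c) := by
  constructor
  · rw [← toM_mul, ← toM_mul, show c*(c*c) = c^3 by rw [← pow_two, ← pow_succ'], h3, toM_one]
  · rw [← toM_one]; exact toM_ne h1

lemma ord4_toM {x : SL23} (h4 : x^4 = 1) (h2 : x^2 ≠ 1) : ord4M (toM x) := by
  constructor
  · simp only [← toM_mul]
    rw [show x*x*(x*x) = x^4 by rw [show x^4 = x^2*x^2 by rw [← pow_add], pow_two], h4, toM_one]
  · rw [← toM_mul, ← toM_one]; exact toM_ne (by rwa [show x*x = x^2 by rw [← pow_two]])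

lemma badB_of_M {u v w : SL23} (h : BadBM (toM u) (toM v) (toM w)) : BadB u v w := by
  obtain ⟨hne, heq⟩ := h
  simp only [← toM_zz, ← toM_inv, ← toM_mul] at hne heq
  exact ⟨fun hh => hne (congrArg toM hh),
    heq.imp (fun h => toM_inj h) (fun h => toM_inj h)⟩

lemma claimB_SL (c d e : SL23) (h3c : c^3 = 1) (hc1 : c ≠ 1) (h3d : d^3 = 1) (hd1 : d ≠ 1)
    (h3e : e^3 = 1) (he1 : e ≠ 1) (hdc : d ≠ c) (hdc' : d ≠ c⁻¹) (hec : e ≠ c) (hec' : e ≠ c⁻¹)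
    (hed : e ≠ d) (hed' : e ≠ d⁻¹) :
    BadB c d e ∨ BadB c e d ∨ BadB d c e ∨ BadB d e c ∨ BadB e c d ∨ BadB e d c := by
  have h := claimB_M (toM c) (toM_mem c) (toM d) (toM_mem d) (toM e) (toM_mem e)
    ⟨ord3_toM h3c hc1, ord3_toM h3d hd1, ord3_toM h3e he1,
     toM_ne hdc, by rw [← toM_inv]; exact toM_ne hdc',
     toM_ne hec, by rw [← toM_inv]; exact toM_ne hec',
     toM_ne hed, by rw [← toM_inv]; exact toM_ne hed'⟩
  unfold concB at h
  exact h.imp badB_of_M (fun h => h.imp badB_of_M (fun h => h.imp badB_of_M (fun h =>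
    h.imp badB_of_M (fun h => h.imp badB_of_M badB_of_M))))

lemma claimC_SL (x y c : SL23) (h4x : x^4 = 1) (h2x : x^2 ≠ 1) (h4y : y^4 = 1) (h2y : y^2 ≠ 1)
    (hyx : y ≠ x) (hyx' : y ≠ x⁻¹) (h3c : c^3 = 1) (hc1 : c ≠ 1) : BadC x y c := by
  have h := claimC_M (toM x) (toM_mem x) (toM y) (toM_mem y) (toM c) (toM_mem c)
    ⟨ord4_toM h4x h2x, ord4_toM h4y h2y, toM_ne hyx,
     by rw [← toM_inv]; exact toM_ne hyx', ord3_toM h3c hc1⟩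
  unfold BadCM at h
  unfold BadC
  simp only [← toM_mul] at h
  refine h.imp ?_ (fun h => h.imp ?_ (fun h => h.imp ?_ ?_)) <;>
    exact fun ⟨heq, hne⟩ => ⟨toM_inj heq, fun hh => hne (congrArg toM hh)⟩

/-! extra small decide facts -/
lemma zz_mul_self : zz * zz = 1 := by decide
lemma zz_ne_one : zz ≠ 1 := by decide
lemma zz_central : ∀ s : SL23, zz * s = s * zz := by decide
lemma order2_unique : ∀ s : SL23, s * s = 1 → s ≠ 1 → s = zz := by decide
lemma c_shift : ∀ s : SL23, ¬ s^4 = 1 → ¬ s^3 = 1 → (¬ (zz*s)^4 = 1 ∧ (zz*s)^3 = 1) := by decide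
lemma cardO4 : (Finset.univ.filter fun s : SL23 => s^4 = 1).card = 8 := by decide
lemma sq_ne_one : ∀ s : SL23, s^4 = 1 → s ≠ 1 → s ≠ zz → s^2 ≠ 1 := by decide
lemma ne_one_of_ord3 : ∀ s : SL23, ¬ s^4 = 1 → s ≠ 1 := by decide

lemma mainSL (f : SL23 ≃* SL23) :
    (Finset.univ.filter fun s : SL23 => f s = s⁻¹).card ≤ 12 := by
  set S := Finset.univ.filter fun s : SL23 => f s = s⁻¹ with hS
  have memS : ∀ s : SL23, s ∈ S ↔ f s = s⁻¹ := by
    intro s; simp [hS]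
  -- closure properties
  have hfz : f zz = zz := by
    apply order2_unique
    · rw [← map_mul, zz_mul_self, map_one]
    · intro h
      exact zz_ne_one (f.injective (by rw [h, map_one]))
  have hSinv : ∀ a : SL23, a ∈ S → a⁻¹ ∈ S := by
    intro a ha; rw [memS] at ha ⊢
    rw [map_inv, ha, inv_inv]
  have hSz : ∀ a : SL23, a ∈ S → zz * a ∈ S := by
    intro a ha; rw [memS] at ha ⊢
    rw [map_mul, hfz, ha, mul_inv_rev,
      show zz⁻¹ = zz from inv_eq_of_mul_eq_one_right zz_mul_self, ← zz_central]
  have hSxyx : ∀ a b : SL23, a ∈ S → b ∈ S → a * (b * a) ∈ S := by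
    intro a b ha hb; rw [memS] at ha hb ⊢
    rw [map_mul, map_mul, ha, hb, mul_inv_rev, mul_inv_rev, mul_assoc]
  have hScomm : ∀ a b : SL23, a ∈ S → b ∈ S → a * b ∈ S → a * b = b * a := by
    intro a b ha hb hab; rw [memS] at ha hb hab
    have h : (a*b)⁻¹ = (b*a)⁻¹ := by
      rw [← hab, map_mul, ha, hb, mul_inv_rev]
    exact inv_injective h
  have hkey : ∀ u v w : SL23, u ∈ S → v ∈ S → w ∈ S → ¬ BadB u v w := by
    rintro u v w hu hv hw ⟨hne, heq | heq⟩
    · exact hne (hScomm u v hu hv (by rw [heq]; exact hSz w hw))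
    · exact hne (hScomm u v hu hv (by rw [heq]; exact hSz _ (hSinv w hw)))
  -- partition
  set A := S.filter (fun s => s^4 = 1) with hA
  set Bf := (S.filter fun s => ¬ s^4 = 1).filter (fun s => s^3 = 1) with hB
  set Cf := (S.filter fun s => ¬ s^4 = 1).filter (fun s => ¬ s^3 = 1) with hC
  have hsplit : S.card = A.card + Bf.card + Cf.card := by
    rw [← Finset.card_filter_add_card_filter_not (s := S) (p := fun s => s^4 = 1)]
    rw [← Finset.card_filter_add_card_filter_not
      (s := S.filter fun s => ¬ s^4 = 1) (p := fun s => s^3 = 1)]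
    ring
  -- membership helpers
  have memBf : ∀ s, s ∈ Bf ↔ (s ∈ S ∧ ¬ s^4 = 1 ∧ s^3 = 1) := by
    intro s; simp [hB, Finset.mem_filter, and_assoc]
  have memCf : ∀ s, s ∈ Cf ↔ (s ∈ S ∧ ¬ s^4 = 1 ∧ ¬ s^3 = 1) := by
    intro s; simp [hC, Finset.mem_filter, and_assoc]
  have memA : ∀ s, s ∈ A ↔ (s ∈ S ∧ s^4 = 1) := by
    intro s; simp [hA, Finset.mem_filter]
  -- C ≤ B
  have hCB : Cf.card ≤ Bf.card := by
    apply Finset.card_le_card_of_injOn (fun s => zz * s)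
    · intro s hs
      rw [Finset.mem_coe, memCf] at hs
      obtain ⟨hsS, h4, h3⟩ := hs
      obtain ⟨h4', h3'⟩ := c_shift s h4 h3
      exact (memBf _).2 ⟨hSz s hsS, h4', h3'⟩
    · intro a _ b _ h
      exact mul_left_cancel h
  -- extraction helpers
  have card2 : ∀ a b : SL23, ({a, b} : Finset SL23).card ≤ 2 := by
    intro a b
    have h1 := Finset.card_insert_le a ({b} : Finset SL23)
    have h2 : ({b} : Finset SL23).card = 1 := Finset.card_singleton b
    omega
  have card4 : ∀ a b c d : SL23, ({a, b, c, d} : Finset SL23).card ≤ 4 := by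
    intro a b c d
    have h1 := Finset.card_insert_le a ({b, c, d} : Finset SL23)
    have h2 := Finset.card_insert_le b ({c, d} : Finset SL23)
    have h3 := Finset.card_insert_le c ({d} : Finset SL23)
    have h4 : ({d} : Finset SL23).card = 1 := Finset.card_singleton d
    omega
  have extract2 : ∀ (T : Finset SL23) (a b : SL23), 3 ≤ T.card →
      ∃ u, u ∈ T ∧ u ≠ a ∧ u ≠ b := by
    intro T a b hT
    have hs := Finset.card_le_card_sdiff_add_card (s := T) (t := {a, b})
    have h2 := card2 a b
    obtain ⟨u, hu⟩ := Finset.card_pos.1 (show 0 < (T \ {a, b}).card by omega)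
    rw [Finset.mem_sdiff, Finset.mem_insert, Finset.mem_singleton] at hu
    exact ⟨u, hu.1, fun h => hu.2 (Or.inl h), fun h => hu.2 (Or.inr h)⟩
  have extract4 : ∀ (T : Finset SL23) (a b c d : SL23), 5 ≤ T.card →
      ∃ u, u ∈ T ∧ u ≠ a ∧ u ≠ b ∧ u ≠ c ∧ u ≠ d := by
    intro T a b c d hT
    have hs := Finset.card_le_card_sdiff_add_card (s := T) (t := {a, b, c, d})
    have h4 := card4 a b c d
    obtain ⟨u, hu⟩ := Finset.card_pos.1 (show 0 < (T \ {a, b, c, d}).card by omega)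
    rw [Finset.mem_sdiff, Finset.mem_insert, Finset.mem_insert, Finset.mem_insert,
      Finset.mem_singleton] at hu
    exact ⟨u, hu.1, fun h => hu.2 (Or.inl h), fun h => hu.2 (Or.inr (Or.inl h)),
      fun h => hu.2 (Or.inr (Or.inr (Or.inl h))), fun h => hu.2 (Or.inr (Or.inr (Or.inr h)))⟩
  -- B ≤ 4
  have hB4 : Bf.card ≤ 4 := by
    by_contra hcon
    push_neg at hcon
    obtain ⟨c, hcBf⟩ := Finset.card_pos.1 (show 0 < Bf.card by omega)
    obtain ⟨d, hdBf, hdc, hdc'⟩ := extract2 Bf c c⁻¹ (by omega)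
    obtain ⟨e, heBf, hec, hec', hed, hed'⟩ := extract4 Bf c c⁻¹ d d⁻¹ (by omega)
    rw [memBf] at hcBf hdBf heBf
    obtain ⟨hcS, hc4, hc3⟩ := hcBf
    obtain ⟨hdS, hd4, hd3⟩ := hdBf
    obtain ⟨heS, he4, he3⟩ := heBf
    have h := claimB_SL c d e hc3 (ne_one_of_ord3 c hc4) hd3 (ne_one_of_ord3 d hd4)
      he3 (ne_one_of_ord3 e he4) hdc hdc' hec hec' hed hed'
    rcases h with h|h|h|h|h|h
    · exact hkey c d e hcS hdS heS h
    · exact hkey c e d hcS heS hdS h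
    · exact hkey d c e hdS hcS heS h
    · exact hkey d e c hdS heS hcS h
    · exact hkey e c d heS hcS hdS h
    · exact hkey e d c heS hdS hcS h
  -- A ≤ 4 unless B empty
  have hA4 : Bf.card = 0 ∨ A.card ≤ 4 := by
    by_cases hb0 : Bf.card = 0
    · exact Or.inl hb0
    right
    by_contra hcon
    push_neg at hcon
    obtain ⟨c, hcBf⟩ := Finset.card_pos.1 (show 0 < Bf.card by omega)
    rw [memBf] at hcBf
    obtain ⟨hcS, hc4, hc3⟩ := hcBf
    obtain ⟨x, hxA, hx1, hxz⟩ := extract2 A 1 zz (by omega)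
    obtain ⟨y, hyA, hy1, hyz, hyx, hyx'⟩ := extract4 A 1 zz x x⁻¹ (by omega)
    rw [memA] at hxA hyA
    obtain ⟨hxS, hx4⟩ := hxA
    obtain ⟨hyS, hy4⟩ := hyA
    have h := claimC_SL x y c hx4 (sq_ne_one x hx4 hx1 hxz) hy4 (sq_ne_one y hy4 hy1 hyz)
      hyx hyx' hc3 (ne_one_of_ord3 c hc4)
    unfold BadC at h
    have hxcx : x * (c * x) ∈ S := hSxyx x c hxS hcS
    have hycy : y * (c * y) ∈ S := hSxyx y c hyS hcS
    rcases h with ⟨heq, hne⟩|⟨heq, hne⟩|⟨heq, hne⟩|⟨heq, hne⟩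
    · exact hne (hScomm y _ hyS hxcx (by rw [heq]; exact hcS))
    · exact hne (hScomm x _ hxS hycy (by rw [heq]; exact hcS))
    · exact hne (hScomm y c hyS hcS (by rw [heq]; exact hxcx))
    · exact hne (hScomm x c hxS hcS (by rw [heq]; exact hycy))
  -- assemble
  have hA8 : A.card ≤ 8 := by
    have hsub : A ⊆ Finset.univ.filter (fun s : SL23 => s^4 = 1) := by
      intro s hs
      rw [memA] at hs
      simp [hs.2]
    calc A.card ≤ _ := Finset.card_le_card hsub
    _ = 8 := cardO4
  rcases hA4 with h0 | h4
  · omega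
  · omega

/-- Let `G` be a finite group and `K` a normal subgroup of `G` isomorphic to
`SL(2,3)`, the group of `2×2` matrices of determinant `1` over the field with `3` elements.
If `α ∈ G \ K` has order `2`, then the number of elements of order `2` in the coset `αK` is
at most `12`. -/
theorem stmt4 (G : Type*) [Group G] [Fintype G]
    (K : Subgroup G) (hKnormal : K.Normal)
    (hK : Nonempty (K ≃* Matrix.SpecialLinearGroup (Fin 2) (ZMod 3)))
    (α : G) (hαK : α ∉ K) (hα2 : orderOf α = 2) :
    Nat.card {x : G | orderOf x = 2 ∧ α⁻¹ * x ∈ K} ≤ 12 := by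
  obtain ⟨e⟩ := hK
  have hα1 : α * α = 1 := by
    have := pow_orderOf_eq_one α
    rwa [hα2, pow_two] at this
  have hαinv : α⁻¹ = α := inv_eq_of_mul_eq_one_right hα1
  let f : SL23 ≃* SL23 := (e.symm.trans (MulAut.conjNormal (H := K) α)).trans e
  have hmap : ∀ (x : G) (hxo : orderOf x = 2) (hxK : α⁻¹ * x ∈ K),
      f (e ⟨α⁻¹ * x, hxK⟩) = (e ⟨α⁻¹ * x, hxK⟩)⁻¹ := by
    intro x hxo hxK
    have hx1 : x * x = 1 := by
      have := pow_orderOf_eq_one x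
      rwa [hxo, pow_two] at this
    have hxinv : x⁻¹ = x := inv_eq_of_mul_eq_one_right hx1
    show e ((MulAut.conjNormal α) (e.symm (e ⟨α⁻¹ * x, hxK⟩))) = _
    rw [e.symm_apply_apply, ← map_inv e]
    congr 1
    ext
    rw [MulAut.conjNormal_apply]
    show α * (α⁻¹ * x) * α⁻¹ = (α⁻¹ * x)⁻¹
    rw [mul_inv_rev, inv_inv, mul_inv_cancel_left, hαinv, hxinv]
  let F : {x : G // x ∈ {x : G | orderOf x = 2 ∧ α⁻¹ * x ∈ K}} → {s : SL23 // f s = s⁻¹} :=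
    fun p => ⟨e ⟨α⁻¹ * p.1, p.2.2⟩, hmap p.1 p.2.1 p.2.2⟩
  have hFinj : Function.Injective F := by
    intro p q h
    have h1 : e ⟨α⁻¹ * p.1, p.2.2⟩ = e ⟨α⁻¹ * q.1, q.2.2⟩ := congrArg Subtype.val h
    have h2 := congrArg Subtype.val (e.injective h1)
    exact Subtype.ext (mul_left_cancel (h2 : α⁻¹ * p.1 = α⁻¹ * q.1))
  calc Nat.card {x : G | orderOf x = 2 ∧ α⁻¹ * x ∈ K}
      ≤ Nat.card {s : SL23 // f s = s⁻¹} := Nat.card_le_card_of_injective F hFinj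
    _ = (Finset.univ.filter fun s : SL23 => f s = s⁻¹).card := by
        rw [Nat.card_eq_fintype_card, Fintype.card_subtype]
    _ ≤ 12 := mainSL f
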